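/- Let σ ∈ R\{0}, H_0(φ) = (1/2)∫_{R²}|∇φ|² + (σ/3)∫_{R²}φ³, H*_{0,1} = inf{H_0(φ) : ‖φ‖_{L²(R²)}² = 1}, and H(φ) = H_0(φ) + A(∫_{R²}φ²)². If A > |H*_{0,1}|, then inf_{φ ∈ H^1(R²)} H(φ) = 0 and φ = 0 is the unique minimizer. -/

import Mathlib

open MeasureTheory

noncomputable section

/-- Membership in `H^1(ℝ²)` (together with its embedding into `L³`), modelled via
`C^1` regularity and integrability of `|∇φ|²`, `φ²`, and `|φ|³`. -/
def InH1 (φ : EuclideanSpace ℝ (Fin 2) → ℝ) : Prop :=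
  ContDiff ℝ 1 φ ∧ Integrable (fun x => ‖fderiv ℝ φ x‖ ^ 2) ∧
    Integrable (fun x => φ x ^ 2) ∧ Integrable (fun x => |φ x| ^ 3)

/-- The Hamiltonian `H₀(φ) = (1/2)∫|∇φ|² + (σ/3)∫φ³` on `ℝ²`. -/
def H0 (σ : ℝ) (φ : EuclideanSpace ℝ (Fin 2) → ℝ) : ℝ :=
  (1 / 2) * (∫ x, ‖fderiv ℝ φ x‖ ^ 2) + (σ / 3) * ∫ x, φ x ^ 3

/-- The grand-canonical Hamiltonian `H(φ) = H₀(φ) + A(∫φ²)²` on `ℝ²`. -/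
def Ham (σ A : ℝ) (φ : EuclideanSpace ℝ (Fin 2) → ℝ) : ℝ :=
  H0 σ φ + A * (∫ x, φ x ^ 2) ^ 2

/-- The set of values `H₀(φ)` over the unit-mass constraint `∫φ² = 1`. -/
def S01 (σ : ℝ) : Set ℝ :=
  {r : ℝ | ∃ φ, InH1 φ ∧ (∫ x, φ x ^ 2) = 1 ∧ H0 σ φ = r}

lemma zero_eq : (0 : EuclideanSpace ℝ (Fin 2) → ℝ) = fun _ => (0 : ℝ) := rfl

lemma InH1_zero : InH1 0 := by
  rw [InH1, zero_eq]
  refine ⟨contDiff_const, ?_, ?_, ?_⟩ <;>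
    · simp only [fderiv_fun_const, Pi.zero_apply, norm_zero, abs_zero]
      simpa using (integrable_zero _ ℝ (volume : Measure (EuclideanSpace ℝ (Fin 2))))

lemma Ham_zero (σ A : ℝ) : Ham σ A 0 = 0 := by
  rw [Ham, H0, zero_eq]
  simp [fderiv_const]

lemma scaling_key (σ : ℝ) (φ : EuclideanSpace ℝ (Fin 2) → ℝ) (hφ : InH1 φ)
    (hq : 0 < ∫ x, φ x ^ 2) :
    ∃ r ∈ S01 σ, H0 σ φ = (∫ x, φ x ^ 2) ^ 2 * r := by
  set q : ℝ := ∫ x, φ x ^ 2 with hqdef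
  set l : ℝ := (Real.sqrt q)⁻¹ with hldef
  have hsq : Real.sqrt q > 0 := Real.sqrt_pos.2 hq
  have hl : l > 0 := inv_pos.2 hsq
  have hl2 : l ^ 2 = q⁻¹ := by
    rw [hldef, inv_pow, Real.sq_sqrt hq.le]
  have habs : |((l ^ 2)⁻¹ : ℝ)| = q := by rw [hl2, inv_inv, abs_of_pos hq]
  set ψ : EuclideanSpace ℝ (Fin 2) → ℝ := fun x => q⁻¹ * φ (l • x) with hψdef
  have hcomp : ∀ f : EuclideanSpace ℝ (Fin 2) → ℝ, ∫ x, f (l • x) = q * ∫ x, f x := by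
    intro f
    have := MeasureTheory.Measure.integral_comp_smul (volume : Measure (EuclideanSpace ℝ (Fin 2))) f l
    simp only [finrank_euclideanSpace_fin, smul_eq_mul] at this
    rw [this, habs]
  have hcompInt : ∀ f : EuclideanSpace ℝ (Fin 2) → ℝ, Integrable f →
      Integrable (fun x => f (l • x)) := by
    intro f hf
    exact (MeasureTheory.integrable_comp_smul_iff
      (volume : Measure (EuclideanSpace ℝ (Fin 2))) f hl.ne').2 hf
  set g : EuclideanSpace ℝ (Fin 2) →L[ℝ] EuclideanSpace ℝ (Fin 2) :=
    l • ContinuousLinearMap.id ℝ _ with hgdef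
  have hg : ∀ x, g x = l • x := fun x => rfl
  have hdφ : Differentiable ℝ φ := hφ.1.differentiable one_ne_zero
  have hfd : ∀ x, fderiv ℝ ψ x = (q⁻¹ * l) • fderiv ℝ φ (l • x) := by
    intro x
    have h1 : fderiv ℝ (fun y => φ (l • y)) x = (fderiv ℝ φ (l • x)).comp g := by
      have hcompeq : (fun y => φ (l • y)) = φ ∘ g := rfl
      rw [hcompeq, fderiv_comp x (hdφ (g x)) g.differentiableAt, g.fderiv, hg]
    have h2 : (fderiv ℝ φ (l • x)).comp g = l • fderiv ℝ φ (l • x) := by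
      ext v
      simp [hg, ContinuousLinearMap.comp_apply, (fderiv ℝ φ (l • x)).map_smul]
    have h3 : fderiv ℝ ψ x = q⁻¹ • fderiv ℝ (fun y => φ (l • y)) x := by
      rw [hψdef]
      exact fderiv_const_mul ((hdφ (l • x)).comp x g.differentiableAt) q⁻¹
    rw [h3, h1, h2, smul_smul]
  have hfdn : (fun x => ‖fderiv ℝ ψ x‖ ^ 2)
      = fun x => (q⁻¹ * l) ^ 2 * ‖fderiv ℝ φ (l • x)‖ ^ 2 := by
    funext x
    rw [hfd x, norm_smul, Real.norm_eq_abs, abs_of_pos (by positivity : (0:ℝ) < q⁻¹ * l)]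
    ring
  have hql : (q⁻¹ * l) ^ 2 * q = q⁻¹ * q⁻¹ := by
    rw [mul_pow, hl2]
    field_simp
  -- integral identities
  have hI1 : ∫ x, ‖fderiv ℝ ψ x‖ ^ 2 = q⁻¹ * q⁻¹ * ∫ x, ‖fderiv ℝ φ x‖ ^ 2 := by
    have hc := hcomp (fun y => ‖fderiv ℝ φ y‖ ^ 2)
    rw [hfdn, MeasureTheory.integral_const_mul, hc, ← mul_assoc, hql]
  have hψsq : (fun x => ψ x ^ 2) = fun x => q⁻¹ * q⁻¹ * (fun y => φ y ^ 2) (l • x) := by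
    funext x; simp only [hψdef]; ring
  have hI2 : ∫ x, ψ x ^ 2 = 1 := by
    have hc := hcomp (fun y => φ y ^ 2)
    simp only [hψsq]
    rw [MeasureTheory.integral_const_mul, hc, ← hqdef]
    field_simp
  have hψcub : (fun x => ψ x ^ 3) = fun x => q⁻¹ * (q⁻¹ * q⁻¹) * (fun y => φ y ^ 3) (l • x) := by
    funext x; simp only [hψdef]; ring
  have hI3 : ∫ x, ψ x ^ 3 = q⁻¹ * q⁻¹ * ∫ x, φ x ^ 3 := by
    have hc := hcomp (fun y => φ y ^ 3)
    simp only [hψcub]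
    rw [MeasureTheory.integral_const_mul, hc]
    field_simp
  -- InH1 ψ
  have hInH1 : InH1 ψ := by
    refine ⟨?_, ?_, ?_, ?_⟩
    · exact contDiff_const.mul (hφ.1.comp (g.contDiff))
    · rw [hfdn]
      exact ((hcompInt _ hφ.2.1).const_mul _)
    · rw [hψsq]
      exact ((hcompInt _ hφ.2.2.1).const_mul _)
    · have : (fun x => |ψ x| ^ 3) = fun x => q⁻¹ * (q⁻¹ * q⁻¹) * (fun y => |φ y| ^ 3) (l • x) := by
        funext x
        simp only [hψdef, abs_mul, abs_of_pos (inv_pos.2 hq)]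
        ring
      rw [this]
      exact ((hcompInt _ hφ.2.2.2).const_mul _)
  refine ⟨H0 σ ψ, ⟨ψ, hInH1, hI2, rfl⟩, ?_⟩
  simp only [H0]
  rw [hI1, hI3]
  have hq0 : q ≠ 0 := hq.ne'
  field_simp

/-- If `A > |H*_{0,1}|` (with `-∞ < H*_{0,1} < 0`), then
`inf_{φ ∈ H¹(ℝ²)} H(φ) = 0` and `φ = 0` is the unique minimizer. -/
theorem stmt6 (σ A : ℝ) (hσ : σ ≠ 0)
    (hbdd : BddBelow (S01 σ)) (hne : (S01 σ).Nonempty) (hneg : sInf (S01 σ) < 0)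
    (hA : |sInf (S01 σ)| < A) :
    IsLeast {r : ℝ | ∃ φ, InH1 φ ∧ Ham σ A φ = r} 0 ∧
    ∀ φ, InH1 φ → Ham σ A φ = 0 → φ = 0 := by
  have hAi : 0 < sInf (S01 σ) + A := by
    rw [abs_of_neg hneg] at hA; linarith
  -- for any φ with positive mass, Ham is strictly positive
  have hpos : ∀ φ, InH1 φ → 0 < ∫ x, φ x ^ 2 → 0 < Ham σ A φ := by
    intro φ hφ hq
    obtain ⟨r, hr, hH⟩ := scaling_key σ φ hφ hq
    have hrle : sInf (S01 σ) ≤ r := csInf_le hbdd hr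
    have hq2 : 0 < (∫ x, φ x ^ 2) ^ 2 := by positivity
    have : (∫ x, φ x ^ 2) ^ 2 * (sInf (S01 σ) + A) ≤ Ham σ A φ := by
      rw [Ham, hH]
      nlinarith
    nlinarith
  -- zero mass implies φ = 0
  have hzero : ∀ φ, InH1 φ → (∫ x, φ x ^ 2) = 0 → φ = 0 := by
    intro φ hφ h0
    have hae : (fun x => φ x ^ 2) =ᵐ[volume] 0 :=
      (integral_eq_zero_iff_of_nonneg (fun x => sq_nonneg _) hφ.2.2.1).1 h0
    have hae2 : φ =ᵐ[(volume : Measure (EuclideanSpace ℝ (Fin 2)))] 0 := by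
      filter_upwards [hae] with x hx
      simpa [pow_eq_zero_iff] using hx
    exact (Continuous.ae_eq_iff_eq volume hφ.1.continuous continuous_const).1 hae2
  have hnn : ∀ φ, InH1 φ → 0 ≤ ∫ x, φ x ^ 2 := fun φ _ =>
    integral_nonneg fun x => sq_nonneg _
  constructor
  · constructor
    · exact ⟨0, InH1_zero, Ham_zero σ A⟩
    · rintro r ⟨φ, hφ, rfl⟩
      rcases eq_or_lt_of_le (hnn φ hφ) with h | h
      · rw [hzero φ hφ h.symm, Ham_zero]
      · exact (hpos φ hφ h).le
  · intro φ hφ hH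
    rcases eq_or_lt_of_le (hnn φ hφ) with h | h
    · exact hzero φ hφ h.symm
    · exact absurd hH (hpos φ hφ h).ne'
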